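/- arXiv:2305.17391 — 4 statements merged into one kernel-verified Lean document; each statement's English description precedes it below -/
import Mathlib

section
/- Let h : ℝ → ℝ be uniformly continuous on [1, ∞). If the limit as t → ∞ of ∫_1^t h(s) ds exists as a real number, then h(t) → 0 as t → ∞. -/
/-- Barbălat's Lemma: if `h` is uniformly continuous on `[1, ∞)` and
`∫_1^t h(s) ds` converges to a real limit as `t → ∞`, then `h(t) → 0`. -/
theorem barbalat (h : ℝ → ℝ)
    (huc : UniformContinuousOn h (Set.Ici 1))
    (hlim : ∃ L : ℝ, Filter.Tendsto (fun t => ∫ s in (1:ℝ)..t, h s)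
      Filter.atTop (nhds L)) :
    Filter.Tendsto h Filter.atTop (nhds 0) := by
  obtain ⟨L, hL⟩ := hlim
  have hcont : ContinuousOn h (Set.Ici 1) := huc.continuousOn
  have hint : ∀ a b : ℝ, 1 ≤ a → 1 ≤ b → IntervalIntegrable h MeasureTheory.volume a b := by
    intro a b ha hb
    apply (hcont.mono ?_).intervalIntegrable
    intro x hx
    have := hx.1
    simp only [Set.mem_Ici]
    calc (1:ℝ) ≤ min a b := le_min ha hb
    _ ≤ x := this
  by_contra hnot
  rw [Metric.tendsto_atTop] at hnot
  push_neg at hnot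
  obtain ⟨ε, hε, hseq⟩ := hnot
  rw [Metric.uniformContinuousOn_iff] at huc
  obtain ⟨δ, hδ, hucd⟩ := huc (ε/2) (by linarith)
  set d : ℝ := min δ 1 / 2 with hd
  have hd0 : 0 < d := by positivity
  have hdδ : d < δ := by
    have : min δ 1 ≤ δ := min_le_left _ _
    have : min δ 1 / 2 < min δ 1 := by
      have : 0 < min δ 1 := lt_min hδ one_pos
      linarith
    calc d < min δ 1 := this
    _ ≤ δ := min_le_left _ _
  -- the difference of integrals tends to 0
  have hdiff : Filter.Tendsto
      (fun t => (∫ s in (1:ℝ)..(t + d), h s) - ∫ s in (1:ℝ)..t, h s)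
      Filter.atTop (nhds 0) := by
    have h1 : Filter.Tendsto (fun t => ∫ s in (1:ℝ)..(t + d), h s)
        Filter.atTop (nhds L) :=
      hL.comp (Filter.tendsto_atTop_add_const_right _ d Filter.tendsto_id)
    have := h1.sub hL
    simpa using this
  rw [Metric.tendsto_atTop] at hdiff
  obtain ⟨N, hN⟩ := hdiff (d * (ε/2)) (by positivity)
  obtain ⟨t, ht, hht⟩ := hseq (max N 1)
  have ht1 : (1:ℝ) ≤ t := le_trans (le_max_right N 1) ht
  have htN : N ≤ t := le_trans (le_max_left N 1) ht
  have habs : ε ≤ |h t| := by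
    have := hht
    rwa [Real.dist_eq, sub_zero] at this
  have hsmall := hN t htN
  rw [Real.dist_eq, sub_zero] at hsmall
  -- rewrite difference as integral over [t, t+d]
  have hsum := intervalIntegral.integral_add_adjacent_intervals
    (hint 1 t le_rfl ht1) (hint t (t + d) ht1 (by linarith))
  have heq : (∫ s in (1:ℝ)..(t + d), h s) - (∫ s in (1:ℝ)..t, h s)
      = ∫ s in t..(t + d), h s := by linarith
  rw [heq] at hsmall
  -- pointwise bounds on [t, t+d]
  have hclose : ∀ s ∈ Set.Icc t (t + d), |h s - h t| < ε / 2 := by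
    intro s hs
    have hs1 : s ∈ Set.Ici (1:ℝ) := le_trans ht1 hs.1
    have hdist : dist s t < δ := by
      rw [Real.dist_eq, abs_of_nonneg (by linarith [hs.1])]
      have := hs.2
      linarith
    have := hucd s hs1 t (Set.mem_Ici.mpr ht1) hdist
    rwa [Real.dist_eq] at this
  rcases le_abs.mp habs with hpos | hneg
  · -- h t ≥ ε : h ≥ ε/2 on [t, t+d]
    have hlb : ∀ s ∈ Set.Icc t (t + d), ε / 2 ≤ h s := by
      intro s hs
      have := hclose s hs
      have := abs_lt.mp this
      linarith [this.1]
    have hmono := intervalIntegral.integral_mono_on (by linarith : t ≤ t + d)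
      (intervalIntegrable_const) (hint t (t + d) ht1 (by linarith)) hlb
    rw [intervalIntegral.integral_const] at hmono
    simp only [smul_eq_mul, add_sub_cancel_left] at hmono
    have := le_abs_self (∫ s in t..(t + d), h s)
    linarith
  · -- h t ≤ -ε : h ≤ -ε/2 on [t, t+d]
    have hub : ∀ s ∈ Set.Icc t (t + d), h s ≤ -(ε / 2) := by
      intro s hs
      have := hclose s hs
      have := abs_lt.mp this
      linarith [this.2]
    have hmono := intervalIntegral.integral_mono_on (by linarith : t ≤ t + d)
      (hint t (t + d) ht1 (by linarith)) (intervalIntegrable_const) hub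
    rw [intervalIntegral.integral_const] at hmono
    simp only [smul_eq_mul, add_sub_cancel_left] at hmono
    have := neg_abs_le (∫ s in t..(t + d), h s)
    linarith
end

section
/- Let d1, d2, u*, v*, w* > 0, let ξ, χ, u, v ≥ 0, and suppose ξ·χ²·v*·w*·u³·v² + χ²·w*·(d1·u* + d2·v*)·u²·v² + ξ²·(v*)²·u² ≤ 4·d1·d2·u*·v*. Then the symmetric 3×3 real matrix B with rows (d1·u*, -ξ·v*·u/2, -χ·w*·u·v/2), (-ξ·v*·u/2, d2·v*, -χ·w*·u·v/2), (-χ·w*·u·v/2, -χ·w*·u·v/2, w*) is positive semidefinite. -/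
/-- Auxiliary: a nonnegative binary quadratic form. -/
lemma quad_nonneg (a b e x y : ℝ) (ha : 0 ≤ a) (hb : 0 ≤ b) (he : 0 ≤ e)
    (h : e ^ 2 ≤ a * b) : 0 ≤ a * x ^ 2 - 2 * e * x * y + b * y ^ 2 := by
  rcases eq_or_lt_of_le ha with ha0 | ha0
  · have he0 : e = 0 := by nlinarith
    subst he0
    nlinarith [mul_nonneg hb (sq_nonneg y)]
  · nlinarith [sq_nonneg (a * x - e * y), mul_nonneg (sub_nonneg.2 h) (sq_nonneg y)]

/-- Positive semidefiniteness of the matrix `B` of gradient terms in the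
Lyapunov functional estimate, under the smallness condition on `ξ, χ`. -/
theorem B_posSemidef (d1 d2 us vs ws ξ χ u v : ℝ)
    (hd1 : 0 < d1) (hd2 : 0 < d2) (hus : 0 < us) (hvs : 0 < vs) (hws : 0 < ws)
    (hξ : 0 ≤ ξ) (hχ : 0 ≤ χ) (hu : 0 ≤ u) (hv : 0 ≤ v)
    (hcond : ξ * χ ^ 2 * vs * ws * u ^ 3 * v ^ 2
      + χ ^ 2 * ws * (d1 * us + d2 * vs) * u ^ 2 * v ^ 2
      + ξ ^ 2 * vs ^ 2 * u ^ 2 ≤ 4 * d1 * d2 * us * vs)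
    (B : Matrix (Fin 3) (Fin 3) ℝ)
    (hB : B = !![d1 * us, -(ξ * vs * u) / 2, -(χ * ws * u * v) / 2;
                 -(ξ * vs * u) / 2, d2 * vs, -(χ * ws * u * v) / 2;
                 -(χ * ws * u * v) / 2, -(χ * ws * u * v) / 2, ws]) :
    B.PosSemidef := by
  subst hB
  rw [Matrix.posSemidef_iff_dotProduct_mulVec]
  constructor
  · ext i j
    fin_cases i <;> fin_cases j <;>
      simp [Matrix.conjTranspose, Matrix.vecHead, Matrix.vecTail]
  · intro x
    have hx : star x = x := rfl
    rw [hx]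
    simp [dotProduct, Matrix.mulVec, Fin.sum_univ_three,
      Matrix.cons_val_zero, Matrix.cons_val_one, Matrix.head_cons]
    set x0 := x 0
    set x1 := x 1
    set x2 := x 2
    set k : ℝ := ws * χ ^ 2 * u ^ 2 * v ^ 2 / 4 with hkdef
    have hk : 0 ≤ k := by positivity
    have t1 : 0 ≤ ξ * χ ^ 2 * vs * ws * u ^ 3 * v ^ 2 := by positivity
    have t2 : 0 ≤ χ ^ 2 * ws * d1 * us * u ^ 2 * v ^ 2 := by positivity
    have t3 : 0 ≤ χ ^ 2 * ws * d2 * vs * u ^ 2 * v ^ 2 := by positivity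
    have t4 : 0 ≤ ξ ^ 2 * vs ^ 2 * u ^ 2 := by positivity
    have ha : 0 ≤ d1 * us - k := by
      have h4 : χ ^ 2 * ws * d2 * vs * u ^ 2 * v ^ 2 ≤ 4 * d1 * d2 * us * vs := by
        nlinarith
      nlinarith [mul_pos hd2 hvs]
    have hb : 0 ≤ d2 * vs - k := by
      have h4 : χ ^ 2 * ws * d1 * us * u ^ 2 * v ^ 2 ≤ 4 * d1 * d2 * us * vs := by
        nlinarith
      nlinarith [mul_pos hd1 hus]
    have he : 0 ≤ ξ * vs * u / 2 + k := by positivity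
    have heab : (ξ * vs * u / 2 + k) ^ 2 ≤ (d1 * us - k) * (d2 * vs - k) := by
      nlinarith
    have key := quad_nonneg (d1 * us - k) (d2 * vs - k) (ξ * vs * u / 2 + k)
      x0 x1 ha hb he heab
    have hsq : 0 ≤ ws * (x2 - χ * u * v / 2 * (x0 + x1)) ^ 2 := by positivity
    rw [hkdef] at key
    linarith [key, hsq]
end

section
/- Let 0 < b2 < √2. Then the system of equations 1 - u = 0, 1 - v + u - b2·w = 0, 1 - w + v + u/(u + w) = 0 has exactly one solution (u, v, w) ∈ ℝ³ with u > 0, v > 0, w > 0, namely u = 1, v = (b2² + 2·b2 + 4 - b2·√((b2 + 2)(b2 + 10)))/(2(b2 + 1)), w = (2 - b2 + √((b2 + 2)(b2 + 10)))/(2(b2 + 1)). -/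
/-- The coexistence steady-state system in the intraguild-predation case with
`b1 = b3 = 0`, `c3 = 1` has exactly one positive solution, given explicitly. -/
theorem intraguild_steady_state_unique (b2 : ℝ) (hb2 : 0 < b2)
    (hb2' : b2 < Real.sqrt 2) :
    ∀ u v w : ℝ,
      (0 < u ∧ 0 < v ∧ 0 < w ∧
        1 - u = 0 ∧ 1 - v + u - b2 * w = 0 ∧ 1 - w + v + u / (u + w) = 0) ↔
      (u = 1 ∧
       v = (b2 ^ 2 + 2 * b2 + 4 - b2 * Real.sqrt ((b2 + 2) * (b2 + 10)))
             / (2 * (b2 + 1)) ∧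
       w = (2 - b2 + Real.sqrt ((b2 + 2) * (b2 + 10))) / (2 * (b2 + 1))) := by
  intro u v w
  set s := Real.sqrt ((b2 + 2) * (b2 + 10)) with hs_def
  have harg : (0:ℝ) < (b2 + 2) * (b2 + 10) := by nlinarith
  have hs0 : 0 < s := Real.sqrt_pos.mpr harg
  have hs2 : s ^ 2 = b2 ^ 2 + 12 * b2 + 20 := by
    rw [hs_def, Real.sq_sqrt harg.le]; ring
  have hb2sq : b2 ^ 2 < 2 := by
    nlinarith [Real.sq_sqrt (show (0:ℝ) ≤ 2 by norm_num), Real.sqrt_nonneg 2]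
  have hb22 : b2 < 2 := by nlinarith
  have hb21 : (0:ℝ) < b2 + 1 := by linarith
  have hsgt : b2 - 2 < s := by nlinarith
  constructor
  · rintro ⟨hu, hv, hw, e1, e2, e3⟩
    have hu1 : u = 1 := by linarith
    subst hu1
    have hvw : v = 2 - b2 * w := by linarith
    have hw1 : (0:ℝ) < 1 + w := by linarith
    have hq : (1 + b2) * w ^ 2 + (b2 - 2) * w - 4 = 0 := by
      have h3 : (1 - w + v + 1 / (1 + w)) * (1 + w) = 0 := by rw [e3]; ring
      have h4 : (1 - w + v) * (1 + w) + 1 = 0 := by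
        field_simp at h3
        linarith [h3]
      nlinarith [h4, hvw]
    have htt : (2 * (1 + b2) * w - (2 - b2) - s) * (2 * (1 + b2) * w - (2 - b2) + s) = 0 := by
      linear_combination 4 * (1 + b2) * hq - hs2
    have hsgt2 : 2 - b2 - s < 0 := by nlinarith [hs2, hs0]
    rcases mul_eq_zero.mp htt with h | h
    · have hw' : w = (2 - b2 + s) / (2 * (b2 + 1)) := by
        field_simp
        linarith
      refine ⟨rfl, ?_, hw'⟩
      rw [hvw, hw']
      field_simp
      ring
    · exfalso
      nlinarith [mul_pos hb21 hw]
  · rintro ⟨hu, hv, hw⟩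
    subst hu hv hw
    have hwpos : (0:ℝ) < (2 - b2 + s) / (2 * (b2 + 1)) := by
      apply div_pos (by linarith) (by linarith)
    have hnum : 0 < b2 ^ 2 + 2 * b2 + 4 - b2 * s := by
      nlinarith [hs2, mul_pos hb2 hs0, sq_nonneg (b2 * s - (b2 ^ 2 + 2 * b2 + 4))]
    have hvpos : (0:ℝ) < (b2 ^ 2 + 2 * b2 + 4 - b2 * s) / (2 * (b2 + 1)) := by
      apply div_pos hnum (by linarith)
    refine ⟨one_pos, hvpos, hwpos, by ring, ?_, ?_⟩
    · field_simp
      ring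
    · set W := (2 - b2 + s) / (2 * (b2 + 1)) with hW
      have hVW : (b2 ^ 2 + 2 * b2 + 4 - b2 * s) / (2 * (b2 + 1)) = 2 - b2 * W := by
        rw [hW]; field_simp; ring
      rw [hVW]
      have h1w : (0:ℝ) < 1 + W := by linarith
      have hq : (1 + b2) * W ^ 2 + (b2 - 2) * W - 4 = 0 := by
        rw [hW]
        field_simp
        linear_combination (b2 + 1) * hs2
      have hkey : (1 - W + (2 - b2 * W) + 1 / (1 + W)) * (1 + W) = 0 := by
        have h1 : 1 / (1 + W) * (1 + W) = 1 := by field_simp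
        linear_combination h1 - hq
      rcases mul_eq_zero.mp hkey with h | h
      · linarith [h]
      · exfalso; linarith
end

section
/- Let 1/10 ≤ b2 < √2, let s ≥ √2/2, and set w̄ = (2 - b2 + √((b2 + 2)(b2 + 10)))/(2(b2 + 1)). Then the symmetric 3×3 real matrix with rows (1, -1/2, -w̄/(2(1 + w̄)·s)), (-1/2, 1, (b2 - 1)/2), (-w̄/(2(1 + w̄)·s), (b2 - 1)/2, 1 + 1/((1 + w̄)·s)) is positive definite. -/
lemma quad_pos_aux (b2 m t X Y Z : ℝ) (hm0 : 0 < m) (hm2 : m^2 ≤ 9/32)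
    (hb : 1/10 ≤ b2) (hb' : b2 ≤ 3/2) (ht : 0 < t)
    (hxyz : ¬(X = 0 ∧ Y = 0 ∧ Z = 0)) :
    0 < X^2 + Y^2 + (1+t)*Z^2 - X*Y - 2*m*X*Z + (b2-1)*Y*Z := by
  have hm' : m ≤ 27/50 := by nlinarith
  by_cases hZ : Z = 0
  · subst hZ
    by_cases hY : Y = 0
    · subst hY
      have hX : X ≠ 0 := by tauto
      have : 0 < X^2 := by positivity
      nlinarith
    · have : 0 < Y^2 := by positivity
      nlinarith [sq_nonneg (2*X - Y)]
  · have hZ2 : 0 < Z^2 := by positivity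
    have hd2 : (b2-1-m)^2 ≤ 1296/625 := by nlinarith
    have hc : 0 < 1 + t - m^2 - (b2-1-m)^2/3 := by nlinarith
    nlinarith [sq_nonneg (X - Y/2 - m*Z), sq_nonneg (3*Y + 2*(b2-1-m)*Z),
      mul_pos hc hZ2]

/-- Positive definiteness of the Lyapunov matrix `Ã₂` in the
intraguild-predation case with `b1 = b3 = 0`, `c3 = 1`. -/
theorem A2tilde_posDef (b2 s : ℝ) (hb2 : 1 / 10 ≤ b2) (hb2' : b2 < Real.sqrt 2)
    (hs : Real.sqrt 2 / 2 ≤ s)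
    (wbar : ℝ)
    (hwbar : wbar = (2 - b2 + Real.sqrt ((b2 + 2) * (b2 + 10))) / (2 * (b2 + 1)))
    (A : Matrix (Fin 3) (Fin 3) ℝ)
    (hA : A = !![1, -(1/2), -wbar / (2 * (1 + wbar) * s);
                 -(1/2), 1, (b2 - 1) / 2;
                 -wbar / (2 * (1 + wbar) * s), (b2 - 1) / 2,
                   1 + 1 / ((1 + wbar) * s)]) :
    A.PosDef := by
  have hr2 : Real.sqrt 2 ^ 2 = 2 := Real.sq_sqrt (by norm_num)
  have hr0 : 0 < Real.sqrt 2 := Real.sqrt_pos.mpr (by norm_num)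
  have hb' : b2 ≤ 3/2 := by nlinarith
  have hs0 : 0 < s := lt_of_lt_of_le (by positivity) hs
  have hW0 : 0 ≤ Real.sqrt ((b2+2)*(b2+10)) := Real.sqrt_nonneg _
  have hw0 : 0 < wbar := by
    rw [hwbar]
    apply div_pos (by linarith) (by linarith)
  have hWle : Real.sqrt ((b2+2)*(b2+10)) ≤ 7*b2+4 := by
    rw [show (7*b2+4 : ℝ) = Real.sqrt ((7*b2+4)^2) from (Real.sqrt_sq (by linarith)).symm]
    apply Real.sqrt_le_sqrt
    nlinarith
  have hw3 : wbar ≤ 3 := by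
    rw [hwbar, div_le_iff₀ (by linarith)]
    linarith
  have hD : 0 < 2 * (1 + wbar) * s := by positivity
  set m : ℝ := wbar / (2 * (1 + wbar) * s) with hm_def
  have hm0 : 0 < m := div_pos hw0 hD
  have h1 : m * (2 * (1 + wbar) * s) = wbar := div_mul_cancel₀ _ (ne_of_gt hD)
  have key : m * (1 + wbar) * Real.sqrt 2 ≤ wbar := by
    nlinarith [mul_nonneg (mul_nonneg hm0.le (by linarith : (0:ℝ) ≤ 1 + wbar))
      (by linarith : (0:ℝ) ≤ 2*s - Real.sqrt 2)]
  have h4 : 4 * m * Real.sqrt 2 ≤ 3 := by nlinarith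
  have hmr : m * Real.sqrt 2 ≤ 3/4 := by linarith
  have hm2 : m^2 ≤ 9/32 := by
    nlinarith [hmr, mul_pos hm0 hr0, hr2, sq_nonneg m]
  have ht : (0:ℝ) < 1 / ((1 + wbar) * s) := by positivity
  refine Matrix.PosDef.of_dotProduct_mulVec_pos ?_ ?_
  · subst hA
    ext i j
    fin_cases i <;> fin_cases j <;> simp [Matrix.conjTranspose_apply]
  · intro x hx
    obtain ⟨i, hi⟩ := Function.ne_iff.mp hx
    have hxyz : ¬(x 0 = 0 ∧ x 1 = 0 ∧ x 2 = 0) := by fin_cases i <;> tauto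
    have hQ := quad_pos_aux b2 m (1 / ((1 + wbar) * s)) (x 0) (x 1) (x 2)
      hm0 hm2 hb2 hb' ht hxyz
    subst hA
    simp only [Matrix.mulVec, dotProduct, Fin.sum_univ_three, star_trivial,
      Pi.star_apply, Matrix.cons_val', Matrix.cons_val_zero, Matrix.cons_val_one,
      Matrix.head_cons, Matrix.empty_val', Matrix.cons_val_fin_one, Matrix.head_fin_const,
      Matrix.cons_val_two, Matrix.tail_cons, Matrix.of_apply]
    refine lt_of_lt_of_eq hQ ?_
    rw [hm_def]
    field_simp
    ring
end
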